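/- Let R be a semihyperring with a multiplicative identity 1 and let I be a hyperideal of R. Then the following are equivalent: (1) I is a semiprime hyperideal; (2) for all a ∈ R: {a·r·a : r ∈ R} ⊆ I if and only if a ∈ I. -/

import Mathlib

/-- A semihyperring `(R, +, ·, 0)`: `+` is a hyperoperation (into nonempty sets),
`·` is an associative single-valued multiplication distributing over `+`,
and `0` is an additive identity and multiplicative absorbing element. -/
class Semihyperring (R : Type*) extends Mul R, Zero R where
  /-- hyperaddition -/
  hadd : R → R → Set R
  hadd_nonempty : ∀ a b : R, (hadd a b).Nonempty
  hadd_comm : ∀ a b : R, hadd a b = hadd b a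
  hadd_assoc : ∀ a b c : R, (⋃ x ∈ hadd a b, hadd x c) = ⋃ x ∈ hadd b c, hadd a x
  hadd_zero : ∀ a : R, hadd a 0 = {a}
  mul_assoc' : ∀ a b c : R, a * b * c = a * (b * c)
  left_distrib' : ∀ a b c : R, (fun x => a * x) '' hadd b c = hadd (a * b) (a * c)
  right_distrib' : ∀ a b c : R, (fun x => x * c) '' hadd a b = hadd (a * c) (b * c)
  mul_zero' : ∀ a : R, a * 0 = 0
  zero_mul' : ∀ a : R, 0 * a = 0

namespace Semihyperring

variable {R : Type*} [Semihyperring R]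

/-- Hyperaddition extended to sets: `A + B = ⋃_{a∈A, b∈B} (a + b)`. -/
def hAddSet (A B : Set R) : Set R := ⋃ a ∈ A, ⋃ b ∈ B, hadd a b

/-- The hypersum `x₁ + x₂ + ⋯ + xₙ` of a list of elements (as a set);
the empty hypersum is `{0}`, so `hSum [x] = {x}`. -/
def hSum : List R → Set R
  | [] => {0}
  | x :: xs => hAddSet {x} (hSum xs)

/-- A left hyperideal. -/
def IsLeftHyperideal (I : Set R) : Prop :=
  I.Nonempty ∧ (∀ a ∈ I, ∀ b ∈ I, hadd a b ⊆ I) ∧ ∀ a ∈ I, ∀ r : R, r * a ∈ I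

/-- A right hyperideal. -/
def IsRightHyperideal (I : Set R) : Prop :=
  I.Nonempty ∧ (∀ a ∈ I, ∀ b ∈ I, hadd a b ⊆ I) ∧ ∀ a ∈ I, ∀ r : R, a * r ∈ I

/-- A (two-sided) hyperideal. -/
def IsHyperideal (I : Set R) : Prop :=
  I.Nonempty ∧ (∀ a ∈ I, ∀ b ∈ I, hadd a b ⊆ I) ∧ ∀ a ∈ I, ∀ r : R, r * a ∈ I ∧ a * r ∈ I

/-- The product `HK`: union of all finite hypersums `a₁·b₁ + ⋯ + aₙ·bₙ` (n ≥ 1)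
with `aᵢ ∈ H`, `bᵢ ∈ K`. -/
def hProd (H K : Set R) : Set R :=
  ⋃ (l : List (R × R)) (_ : l ≠ []) (_ : ∀ p ∈ l, p.1 ∈ H ∧ p.2 ∈ K),
    hSum (l.map fun p => p.1 * p.2)

/-- The hyperideal generated by an element. -/
def genHyperideal (a : R) : Set R := ⋂₀ {I : Set R | IsHyperideal I ∧ a ∈ I}

/-- A prime hyperideal. -/
def IsPrimeHyperideal (P : Set R) : Prop :=
  IsHyperideal P ∧
    ∀ A B : Set R, IsHyperideal A → IsHyperideal B → hProd A B ⊆ P → A ⊆ P ∨ B ⊆ P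

/-- A semiprime hyperideal. -/
def IsSemiprimeHyperideal (I : Set R) : Prop :=
  IsHyperideal I ∧ ∀ H : Set R, IsHyperideal H → hProd H H ⊆ I → H ⊆ I

/-- A strongly irreducible hyperideal. -/
def IsStronglyIrreducibleHyperideal (I : Set R) : Prop :=
  IsHyperideal I ∧
    ∀ H K : Set R, IsHyperideal H → IsHyperideal K → H ∩ K ⊆ I → H ⊆ I ∨ K ⊆ I

/-- An irreducible hyperideal. -/
def IsIrreducibleHyperideal (I : Set R) : Prop :=
  IsHyperideal I ∧
    ∀ H K : Set R, IsHyperideal H → IsHyperideal K → I = H ∩ K → I = H ∨ I = K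

/-- `a·R`: the union of all finite hypersums `a·r₁ + ⋯ + a·rₙ` (n ≥ 1) with `rᵢ ∈ R`. -/
def rightMulSet (a : R) : Set R :=
  ⋃ (l : List R) (_ : l ≠ []), hSum (l.map fun r => a * r)

end Semihyperring

open Semihyperring

namespace Semihyperring

variable {R : Type*} [Semihyperring R]

instance : Semigroup R where
  mul_assoc := mul_assoc'

lemma mem_hAddSet {A B : Set R} {z : R} :
    z ∈ hAddSet A B ↔ ∃ a ∈ A, ∃ b ∈ B, z ∈ hadd a b := by
  simp [hAddSet]

lemma hAddSet_zero_left (S : Set R) : hAddSet ({0} : Set R) S = S := by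
  ext z
  simp only [mem_hAddSet, Set.mem_singleton_iff]
  constructor
  · rintro ⟨a, rfl, b, hb, hz⟩
    rw [hadd_comm, hadd_zero] at hz
    simp only [Set.mem_singleton_iff] at hz
    rwa [hz]
  · intro hz
    refine ⟨0, rfl, z, hz, ?_⟩
    rw [hadd_comm, hadd_zero]
    rfl

lemma hAddSet_assoc (A B C : Set R) :
    hAddSet (hAddSet A B) C = hAddSet A (hAddSet B C) := by
  ext z
  simp only [mem_hAddSet]
  constructor
  · rintro ⟨x, ⟨a, ha, b, hb, hx⟩, c, hc, hz⟩
    have h : z ∈ ⋃ w ∈ hadd a b, hadd w c := Set.mem_biUnion hx hz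
    rw [hadd_assoc] at h
    rcases Set.mem_iUnion₂.1 h with ⟨w, hw, hzw⟩
    exact ⟨a, ha, w, ⟨b, hb, c, hc, hw⟩, hzw⟩
  · rintro ⟨a, ha, x, ⟨b, hb, c, hc, hx⟩, hz⟩
    have h : z ∈ ⋃ w ∈ hadd b c, hadd a w := Set.mem_biUnion hx hz
    rw [← hadd_assoc] at h
    rcases Set.mem_iUnion₂.1 h with ⟨w, hw, hzw⟩
    exact ⟨w, ⟨a, ha, b, hb, hw⟩, c, hc, hzw⟩

lemma hSum_singleton (x : R) : hSum [x] = {x} := by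
  show hAddSet {x} (hSum []) = {x}
  show hAddSet {x} {0} = {x}
  ext z
  simp [mem_hAddSet, hadd_zero]

lemma hSum_append (L₁ L₂ : List R) :
    hSum (L₁ ++ L₂) = hAddSet (hSum L₁) (hSum L₂) := by
  induction L₁ with
  | nil => simp [hSum, hAddSet_zero_left]
  | cons x xs ih =>
    show hAddSet {x} (hSum (xs ++ L₂)) = hAddSet (hAddSet {x} (hSum xs)) (hSum L₂)
    rw [ih, hAddSet_assoc]

lemma image_hAddSet_left (r : R) (A B : Set R) :
    (fun x => r * x) '' hAddSet A B
      = hAddSet ((fun x => r * x) '' A) ((fun x => r * x) '' B) := by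
  ext z
  simp only [Set.mem_image, mem_hAddSet]
  constructor
  · rintro ⟨w, ⟨a, ha, b, hb, hw⟩, rfl⟩
    refine ⟨r * a, ⟨a, ha, rfl⟩, r * b, ⟨b, hb, rfl⟩, ?_⟩
    rw [← left_distrib']
    exact ⟨w, hw, rfl⟩
  · rintro ⟨a', ⟨a, ha, rfl⟩, b', ⟨b, hb, rfl⟩, hz⟩
    rw [← left_distrib'] at hz
    rcases hz with ⟨w, hw, rfl⟩
    exact ⟨w, ⟨a, ha, b, hb, hw⟩, rfl⟩

lemma image_hAddSet_right (r : R) (A B : Set R) :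
    (fun x => x * r) '' hAddSet A B
      = hAddSet ((fun x => x * r) '' A) ((fun x => x * r) '' B) := by
  ext z
  simp only [Set.mem_image, mem_hAddSet]
  constructor
  · rintro ⟨w, ⟨a, ha, b, hb, hw⟩, rfl⟩
    refine ⟨a * r, ⟨a, ha, rfl⟩, b * r, ⟨b, hb, rfl⟩, ?_⟩
    rw [← right_distrib']
    exact ⟨w, hw, rfl⟩
  · rintro ⟨a', ⟨a, ha, rfl⟩, b', ⟨b, hb, rfl⟩, hz⟩
    rw [← right_distrib'] at hz
    rcases hz with ⟨w, hw, rfl⟩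
    exact ⟨w, ⟨a, ha, b, hb, hw⟩, rfl⟩

lemma image_mul_left_hSum (r : R) (L : List R) :
    (fun x => r * x) '' hSum L = hSum (L.map fun x => r * x) := by
  induction L with
  | nil =>
    show (fun x => r * x) '' ({0} : Set R) = ({0} : Set R)
    simp [mul_zero']
  | cons x xs ih =>
    show (fun x => r * x) '' hAddSet {x} (hSum xs)
      = hAddSet {r * x} (hSum (xs.map fun x => r * x))
    rw [image_hAddSet_left, Set.image_singleton, ih]

lemma image_mul_right_hSum (r : R) (L : List R) :
    (fun x => x * r) '' hSum L = hSum (L.map fun x => x * r) := by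
  induction L with
  | nil =>
    show (fun x => x * r) '' ({0} : Set R) = ({0} : Set R)
    simp [zero_mul']
  | cons x xs ih =>
    show (fun x => x * r) '' hAddSet {x} (hSum xs)
      = hAddSet {x * r} (hSum (xs.map fun x => x * r))
    rw [image_hAddSet_right, Set.image_singleton, ih]

lemma hyperideal_zero_mem {I : Set R} (hI : IsHyperideal I) : (0 : R) ∈ I := by
  obtain ⟨⟨a, ha⟩, -, hmul⟩ := hI
  have h := (hmul a ha 0).2
  rwa [mul_zero'] at h

lemma hSum_subset {I : Set R} (hI : IsHyperideal I) :
    ∀ {L : List R}, (∀ x ∈ L, x ∈ I) → hSum L ⊆ I := by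
  intro L
  induction L with
  | nil =>
    intro _ z hz
    simp only [hSum, Set.mem_singleton_iff] at hz
    rw [hz]; exact hyperideal_zero_mem hI
  | cons x xs ih =>
    intro h z hz
    rcases mem_hAddSet.1 hz with ⟨b, hb, c, hc, hzbc⟩
    simp only [Set.mem_singleton_iff] at hb
    subst hb
    exact hI.2.1 b (h b List.mem_cons_self) c
      (ih (fun y hy => h y (List.mem_cons_of_mem _ hy)) hc) hzbc

end Semihyperring

/-- a hyperideal of a semihyperring with identity is semiprime iff
`{a·r·a : r ∈ R} ⊆ I ↔ a ∈ I` for all `a`. -/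
theorem semiprime_iff {R : Type*} [Semihyperring R]
    (one : R) (hone : ∀ x : R, one * x = x ∧ x * one = x)
    (I : Set R) (hI : IsHyperideal I) :
    IsSemiprimeHyperideal I ↔ ∀ a : R, (∀ r : R, a * r * a ∈ I) ↔ a ∈ I := by
  constructor
  · rintro ⟨-, hsp⟩ a
    constructor
    · intro hcond
      set H : Set R := {x | ∃ l : List (R × R), l ≠ [] ∧
          x ∈ hSum (l.map fun p => p.1 * a * p.2)} with hHdef
      have haH : a ∈ H := by
        refine ⟨[(one, one)], by simp, ?_⟩
        simp only [List.map_cons, List.map_nil, hSum_singleton]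
        simp [(hone a).1, (hone a).2]
      have hH : IsHyperideal H := by
        refine ⟨⟨a, haH⟩, ?_, ?_⟩
        · rintro x ⟨l₁, hl₁, hx⟩ y ⟨l₂, hl₂, hy⟩ z hz
          refine ⟨l₁ ++ l₂, by simp [hl₁], ?_⟩
          rw [List.map_append, hSum_append]
          exact mem_hAddSet.2 ⟨x, hx, y, hy, hz⟩
        · rintro x ⟨l, hl, hx⟩ r
          constructor
          · refine ⟨l.map fun p => (r * p.1, p.2), by simpa using hl, ?_⟩
            have h1 : r * x ∈ (fun y => r * y) '' hSum (l.map fun p => p.1 * a * p.2) :=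
              ⟨x, hx, rfl⟩
            rw [image_mul_left_hSum, List.map_map] at h1
            rw [List.map_map]
            convert h1 using 3
            funext p
            simp [mul_assoc]
          · refine ⟨l.map fun p => (p.1, p.2 * r), by simpa using hl, ?_⟩
            have h1 : x * r ∈ (fun y => y * r) '' hSum (l.map fun p => p.1 * a * p.2) :=
              ⟨x, hx, rfl⟩
            rw [image_mul_right_hSum, List.map_map] at h1
            rw [List.map_map]
            convert h1 using 3
            funext p
            simp [mul_assoc]
      have step : ∀ (r s : R), ∀ y ∈ H, r * a * s * y ∈ I := by
        rintro r s y ⟨l, hl, hy⟩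
        have h1 : r * a * s * y ∈
            (fun z => r * a * s * z) '' hSum (l.map fun p => p.1 * a * p.2) :=
          ⟨y, hy, rfl⟩
        rw [image_mul_left_hSum, List.map_map] at h1
        refine hSum_subset hI ?_ h1
        intro q hq
        rcases List.mem_map.1 hq with ⟨p, hp, rfl⟩
        have h2 : a * (s * p.1) * a ∈ I := hcond (s * p.1)
        have h3 := (hI.2.2 _ h2 p.2).2
        have h4 := (hI.2.2 _ h3 r).1
        have heq : (Function.comp (fun z => r * a * s * z)
            (fun p : R × R => p.1 * a * p.2)) p = r * (a * (s * p.1) * a * p.2) := by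
          simp [Function.comp, mul_assoc]
        rw [heq]
        exact h4
      have key : ∀ x ∈ H, ∀ y ∈ H, x * y ∈ I := by
        rintro x ⟨l, hl, hx⟩ y hy
        have h1 : x * y ∈ (fun z => z * y) '' hSum (l.map fun p => p.1 * a * p.2) :=
          ⟨x, hx, rfl⟩
        rw [image_mul_right_hSum, List.map_map] at h1
        refine hSum_subset hI ?_ h1
        intro q hq
        rcases List.mem_map.1 hq with ⟨p, hp, rfl⟩
        exact step p.1 p.2 y hy
      have hprod : hProd H H ⊆ I := by
        intro z hz
        simp only [hProd, Set.mem_iUnion] at hz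
        obtain ⟨l, hl, hmem, hz⟩ := hz
        refine hSum_subset hI ?_ hz
        intro q hq
        rcases List.mem_map.1 hq with ⟨p, hp, rfl⟩
        exact key _ (hmem p hp).1 _ (hmem p hp).2
      exact hsp H hH hprod haH
    · intro haI r
      have h1 := (hI.2.2 a haI r).2
      exact (hI.2.2 _ h1 a).2
  · intro hcond
    refine ⟨hI, fun H hH hprod x hx => ?_⟩
    refine (hcond x).1 fun r => ?_
    have hrx : r * x ∈ H := (hH.2.2 x hx r).1
    have hmem : x * (r * x) ∈ hProd H H := by
      simp only [hProd, Set.mem_iUnion]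
      refine ⟨[(x, r * x)], by simp, by simp [hx, hrx], ?_⟩
      simp [hSum_singleton]
    have := hprod hmem
    rwa [mul_assoc]
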